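/- Let k be a field, let P and Q be quivers, let n ≥ 2, and let I_n denote the admissible ideal of the path algebra spanned by all paths of length at least n. Then every quiver connection (U, Γ) between P and Q is ideally connected as a connection between the bound quivers (P, I_n) and (Q, I_n); equivalently, the natural inclusion of the category of connections between the bound quivers (P,I_n) and (Q,I_n) into the category of all quiver connections between P and Q is bijective on 1-morphisms (fully faithful and essentially surjective). -/

import Mathlib

open TensorProduct

/-- A (finite) quiver: a finite set of vertices together with finitely many arrows between
any two vertices. -/
structure Quiv where
  V : Type
  E : V → V → Type
  [fintV : Fintype V]
  [decV : DecidableEq V]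
  [fintE : ∀ a b, Fintype (E a b)]

attribute [instance] Quiv.fintV Quiv.decV Quiv.fintE

instance (Q : Quiv) : Quiver Q.V := ⟨Q.E⟩

variable (k : Type*) [Field k]

/-- The `k`-linear span of the arrows of `Q` from `a` to `b`. -/
abbrev EdgeSpace (Q : Quiv) (a b : Q.V) : Type _ := Q.E a b →₀ k

/-- The `k`-linear span of the paths of `Q` from `a` to `b`. -/
abbrev PathSpace (Q : Quiv) (a b : Q.V) : Type _ := Quiver.Path a b →₀ k

/-- Reorganizing a family of linear maps into a linear map into the product. -/
def piHomSwap {P : Type*} [AddCommGroup P] [Module k P] {ι : Type*} {B : ι → Type*}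
    [∀ i, AddCommGroup (B i)] [∀ i, Module k (B i)] :
    ((i : ι) → (P →ₗ[k] B i)) →ₗ[k] (P →ₗ[k] (i : ι) → B i) where
  toFun f := LinearMap.pi f
  map_add' f g := by ext x i; rfl
  map_smul' c f := by ext x i; rfl

/-- Prepending an edge to paths, as a bilinear map. -/
noncomputable def consMapF (Q : Quiv) (a b c : Q.V) :
    EdgeSpace k Q a b →ₗ[k] PathSpace k Q b c →ₗ[k] PathSpace k Q a c :=
  Finsupp.lsum k fun e => LinearMap.toSpanSingleton k _
    (Finsupp.lmapDomain k k fun p => (Quiver.Hom.toPath e).comp p)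

/-- Appending an edge to paths, as a bilinear map. -/
noncomputable def consMapB (Q : Quiv) (a b c : Q.V) :
    EdgeSpace k Q b c →ₗ[k] PathSpace k Q a b →ₗ[k] PathSpace k Q a c :=
  Finsupp.lsum k fun e => LinearMap.toSpanSingleton k _
    (Finsupp.lmapDomain k k fun p => p.cons e)

/-- Concatenation of paths, as a bilinear map. -/
noncomputable def compMap (Q : Quiv) (a b c : Q.V) :
    PathSpace k Q a b →ₗ[k] PathSpace k Q b c →ₗ[k] PathSpace k Q a c :=
  Finsupp.lsum k fun p => LinearMap.toSpanSingleton k _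
    (Finsupp.lmapDomain k k fun q => p.comp q)

section Connection

variable (G H : Quiv) (Γ : G.V → H.V → Type*)
  [∀ g h, AddCommGroup (Γ g h)] [∀ g h, Module k (Γ g h)]

/-- The space of formal sums of "a connection edge followed by a path of `H` ending at `h`",
starting at `g ∈ G`; this is the `(g,h)`-component of the `kG`-`kH` bimodule `kΓH`. -/
abbrev WSp (g : G.V) (h : H.V) : Type _ := (h' : H.V) → Γ g h' ⊗[k] PathSpace k H h' h

/-- The space of formal sums of "a path of `G` starting at `g` followed by a connection
edge", ending at `h ∈ H`. -/
abbrev W2Sp (g : G.V) (h : H.V) : Type _ := (g' : G.V) → PathSpace k G g g' ⊗[k] Γ g' h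

/-- A connection between the quivers `G` and `H` with connection edge spaces `Γ`: a family of
linear isomorphisms `U_{g,h} : ⊕_{g'} E^G_{g,g'} ⊗ Γ_{g',h} → ⊕_{h'} Γ_{g,h'} ⊗ E^H_{h',h}`. -/
abbrev Connection : Type _ :=
  ∀ (g : G.V) (h : H.V),
    ((g' : G.V) → (EdgeSpace k G g g' ⊗[k] Γ g' h)) ≃ₗ[k]
    ((h' : H.V) → (Γ g h' ⊗[k] EdgeSpace k H h' h))

/-- Inclusion of a connection edge as a connection edge followed by an empty path. -/
noncomputable def incl0 (g : G.V) (h : H.V) : Γ g h →ₗ[k] WSp k G H Γ g h :=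
  LinearMap.pi fun h' =>
    if hh : h' = h then
      (by subst hh
          exact (TensorProduct.mk k (Γ g h') (PathSpace k H h' h')).flip
            (Finsupp.single Quiver.Path.nil 1))
    else 0

/-- Inclusion of a connection edge as an empty path followed by a connection edge. -/
noncomputable def incl2 (g : G.V) (h : H.V) : Γ g h →ₗ[k] W2Sp k G H Γ g h :=
  LinearMap.pi fun g' =>
    if hg : g' = g then
      (by subst hg
          exact TensorProduct.mk k (PathSpace k G g' g') (Γ g' h)
            (Finsupp.single Quiver.Path.nil 1))
    else 0

variable (U : Connection k G H Γ)

/-- Attaching an emitted `H`-edge to the front of the trailing `H`-path. -/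
noncomputable def attachF (gg : G.V) (h' h'' h : H.V) :
    (Γ gg h' ⊗[k] EdgeSpace k H h' h'') →ₗ[k]
      (PathSpace k H h'' h →ₗ[k] (Γ gg h' ⊗[k] PathSpace k H h' h)) :=
  TensorProduct.lift
    (((LinearMap.llcomp k (PathSpace k H h'' h) (PathSpace k H h' h)
        (Γ gg h' ⊗[k] PathSpace k H h' h)).comp
      (TensorProduct.mk k (Γ gg h') (PathSpace k H h' h))).compl₂
        (consMapF k H h' h'' h))

/-- Moving a single `G`-edge `e : c ⟶ g'` across the connection, on one component. -/
noncomputable def stepAuxF {c g' : G.V} (e : G.E c g') (h h'' : H.V) :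
    (Γ g' h'' ⊗[k] PathSpace k H h'' h) →ₗ[k] WSp k G H Γ c h :=
  TensorProduct.lift
    ((piHomSwap k (P := PathSpace k H h'' h)
        (B := fun h' => Γ c h' ⊗[k] PathSpace k H h' h)).comp
      ((LinearMap.pi fun h' =>
          (attachF k G H Γ c h' h'' h).comp
            (LinearMap.proj (φ := fun h' => Γ c h' ⊗[k] EdgeSpace k H h' h'') h')).comp
        ((((U c h'').toLinearMap).comp
            (LinearMap.single k (fun g'' => EdgeSpace k G c g'' ⊗[k] Γ g'' h'') g')).comp
          ((TensorProduct.mk k (EdgeSpace k G c g') (Γ g' h''))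
            (Finsupp.single e 1)))))

/-- Moving a single `G`-edge `e : c ⟶ g'` across the connection. -/
noncomputable def stepF {c g' : G.V} (e : G.E c g') (h : H.V) :
    WSp k G H Γ g' h →ₗ[k] WSp k G H Γ c h :=
  ∑ h'' : H.V,
    (stepAuxF k G H Γ U e h h'').comp
      (LinearMap.proj (φ := fun h'' => Γ g' h'' ⊗[k] PathSpace k H h'' h) h'')

/-- Transporting across the connection along an entire path of `G` (the iteration `Uⁿ` of the
connection isomorphisms). -/
noncomputable def transportF (g : G.V) (h : H.V) :
    ∀ {c : G.V}, Quiver.Path g c → (WSp k G H Γ c h →ₗ[k] WSp k G H Γ g h)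
  | _, Quiver.Path.nil => LinearMap.id
  | _, Quiver.Path.cons p e => (transportF g h p).comp (stepF k G H Γ U e h)

/-- Transporting linear combinations of paths of `G` across the connection. -/
noncomputable def transportLF (g c : G.V) (h : H.V) :
    PathSpace k G g c →ₗ[k] (WSp k G H Γ c h →ₗ[k] WSp k G H Γ g h) :=
  Finsupp.lsum k fun p => LinearMap.toSpanSingleton k _ (transportF k G H Γ U g h p)

/-- Attaching an emitted `G`-edge to the end of the leading `G`-path. -/
noncomputable def attachB (g g' g'' : G.V) (hh : H.V) :
    (EdgeSpace k G g' g'' ⊗[k] Γ g'' hh) →ₗ[k]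
      (PathSpace k G g g' →ₗ[k] (PathSpace k G g g'' ⊗[k] Γ g'' hh)) :=
  TensorProduct.lift
    (((LinearMap.lflip :
        (PathSpace k G g g' →ₗ[k] Γ g'' hh →ₗ[k] PathSpace k G g g'' ⊗[k] Γ g'' hh) ≃ₗ[k]
        (Γ g'' hh →ₗ[k] PathSpace k G g g' →ₗ[k] PathSpace k G g g'' ⊗[k] Γ g'' hh)) :
        (PathSpace k G g g' →ₗ[k] Γ g'' hh →ₗ[k] PathSpace k G g g'' ⊗[k] Γ g'' hh) →ₗ[k]
        (Γ g'' hh →ₗ[k] PathSpace k G g g' →ₗ[k] PathSpace k G g g'' ⊗[k] Γ g'' hh)).comp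
      (((LinearMap.llcomp k (PathSpace k G g g') (PathSpace k G g g'')
          (Γ g'' hh →ₗ[k] PathSpace k G g g'' ⊗[k] Γ g'' hh))
        (TensorProduct.mk k (PathSpace k G g g'') (Γ g'' hh))).comp
          (consMapB k G g g' g'')))

/-- Moving a single `H`-edge `e : c ⟶ d` backwards across the connection, on one component. -/
noncomputable def stepAuxB {c d : H.V} (e : H.E c d) (g g' : G.V) :
    (PathSpace k G g g' ⊗[k] Γ g' c) →ₗ[k] W2Sp k G H Γ g d :=
  TensorProduct.lift
    (LinearMap.flip
      ((piHomSwap k (P := PathSpace k G g g')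
          (B := fun g'' => PathSpace k G g g'' ⊗[k] Γ g'' d)).comp
        ((LinearMap.pi fun g'' =>
            (attachB k G H Γ g g' g'' d).comp
              (LinearMap.proj (φ := fun g'' => EdgeSpace k G g' g'' ⊗[k] Γ g'' d) g'')).comp
          ((((U g' d).symm.toLinearMap).comp
              (LinearMap.single k (fun h' => Γ g' h' ⊗[k] EdgeSpace k H h' d) c)).comp
            (((TensorProduct.mk k (Γ g' c) (EdgeSpace k H c d)).flip)
              (Finsupp.single e 1))))))

/-- Moving a single `H`-edge `e : c ⟶ d` backwards across the connection. -/
noncomputable def stepB {c d : H.V} (e : H.E c d) (g : G.V) :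
    W2Sp k G H Γ g c →ₗ[k] W2Sp k G H Γ g d :=
  ∑ g' : G.V,
    (stepAuxB k G H Γ U e g g').comp
      (LinearMap.proj (φ := fun g' => PathSpace k G g g' ⊗[k] Γ g' c) g')

/-- Transporting backwards across the connection along an entire path of `H` (the iteration
of the inverse connection isomorphisms). -/
noncomputable def transportB (g : G.V) (c : H.V) :
    ∀ {d : H.V}, Quiver.Path c d → (W2Sp k G H Γ g c →ₗ[k] W2Sp k G H Γ g d)
  | _, Quiver.Path.nil => LinearMap.id
  | _, Quiver.Path.cons p e => (stepB k G H Γ U e g).comp (transportB g c p)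

/-- Transporting linear combinations of paths of `H` backwards across the connection. -/
noncomputable def transportLB (g : G.V) (c d : H.V) :
    PathSpace k H c d →ₗ[k] (W2Sp k G H Γ g c →ₗ[k] W2Sp k G H Γ g d) :=
  Finsupp.lsum k fun p => LinearMap.toSpanSingleton k _ (transportB k G H Γ U g c p)

end Connection

/-- A family of subspaces of the path spaces of a quiver (the graded components of an ideal
of the path algebra). -/
abbrev IdealFamily (Q : Quiv) : Type _ := ∀ a b : Q.V, Submodule k (PathSpace k Q a b)

/-- The family of subspaces is an ideal: it is closed under pre- and post-concatenation with
arbitrary paths. -/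
def IsPathIdeal (Q : Quiv) (I : IdealFamily k Q) : Prop :=
  (∀ (a b c : Q.V) (q : Quiver.Path a b) (x : PathSpace k Q b c), x ∈ I b c →
    Finsupp.mapDomain (fun p => q.comp p) x ∈ I a c) ∧
  (∀ (a b c : Q.V) (x : PathSpace k Q a b) (q : Quiver.Path b c), x ∈ I a b →
    Finsupp.mapDomain (fun p => p.comp q) x ∈ I a c)

/-- The ideal is admissible: it contains no paths of length `≤ 1`, and contains all paths of
length `≥ n` for some `n`. -/
def IsAdmissibleFamily (Q : Quiv) (I : IdealFamily k Q) : Prop :=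
  (∀ (a b : Q.V) (p : Quiver.Path a b), p.length ≤ 1 → Finsupp.single p 1 ∉ I a b) ∧
  (∃ n : ℕ, ∀ (a b : Q.V) (p : Quiver.Path a b), n ≤ p.length → Finsupp.single p 1 ∈ I a b)

/-- The ideal of the path algebra spanned by all paths of length at least `n`. -/
noncomputable def lengthIdeal (Q : Quiv) (n : ℕ) : IdealFamily k Q := fun a b =>
  Submodule.span k {x | ∃ p : Quiver.Path a b, n ≤ p.length ∧ x = Finsupp.single p 1}

section IdeallyConnected

variable (G H : Quiv) (Γ : G.V → H.V → Type*)
  [∀ g h, AddCommGroup (Γ g h)] [∀ g h, Module k (Γ g h)]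

/-- The subspace of `WSp` spanned by connection edges followed by combinations of paths
lying in `I_H`. -/
noncomputable def WIdeal (IH : IdealFamily k H) (a : G.V) (c : H.V) : Submodule k (WSp k G H Γ a c) :=
  Submodule.span k {w | ∃ (h' : H.V) (γ : Γ a h') (y : PathSpace k H h' c),
    y ∈ IH h' c ∧ w = Pi.single h' (γ ⊗ₜ[k] y)}

/-- The subspace of `W2Sp` spanned by combinations of paths lying in `I_G` followed by
connection edges. -/
noncomputable def W2Ideal (IG : IdealFamily k G) (g : G.V) (d : H.V) : Submodule k (W2Sp k G H Γ g d) :=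
  Submodule.span k {w | ∃ (g' : G.V) (x : PathSpace k G g g') (γ : Γ g' d),
    x ∈ IG g g' ∧ w = Pi.single g' (x ⊗ₜ[k] γ)}

variable (U : Connection k G H Γ)

/-- A connection between bound quivers `(G, I_G)` and `(H, I_H)` is ideally connected if the
iterated connection maps carry linear combinations of paths lying in `I_G` composed with a
connection edge to linear combinations of a connection edge composed with paths lying in
`I_H`, and vice versa for the inverse maps. -/
def IsIdeallyConnected (IG : IdealFamily k G) (IH : IdealFamily k H) : Prop :=
  (∀ (a b : G.V) (c : H.V) (x : PathSpace k G a b), x ∈ IG a b → ∀ γ : Γ b c,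
    transportLF k G H Γ U a b c x (incl0 k G H Γ b c γ) ∈ WIdeal k G H Γ IH a c) ∧
  (∀ (g : G.V) (c d : H.V) (y : PathSpace k H c d), y ∈ IH c d → ∀ γ : Γ g c,
    transportLB k G H Γ U g c d y (incl2 k G H Γ g c γ) ∈ W2Ideal k G H Γ IG g d)

end IdeallyConnected

section Aux

lemma single_mem_lengthIdeal (Q : Quiv) (n : ℕ) {a b : Q.V} (p : Quiver.Path a b)
    (hp : n ≤ p.length) (c : k) : Finsupp.single p c ∈ lengthIdeal k Q n a b := by
  have : Finsupp.single p c = c • Finsupp.single p (1 : k) := by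
    simp [Finsupp.smul_single]
  rw [this]
  exact Submodule.smul_mem _ _ (Submodule.subset_span ⟨p, hp, rfl⟩)

lemma lengthIdeal_mono (Q : Quiv) {m n : ℕ} (h : m ≤ n) (a b : Q.V) :
    lengthIdeal k Q n a b ≤ lengthIdeal k Q m a b :=
  Submodule.span_mono (fun _ ⟨p, hp, hx⟩ => ⟨p, h.trans hp, hx⟩)

variable (G H : Quiv) (Γ : G.V → H.V → Type*)
  [∀ g h, AddCommGroup (Γ g h)] [∀ g h, Module k (Γ g h)]

lemma WIdeal_mono {I I' : IdealFamily k H} (hI : ∀ a b, I a b ≤ I' a b) (a : G.V) (c : H.V) :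
    WIdeal k G H Γ I a c ≤ WIdeal k G H Γ I' a c :=
  Submodule.span_mono (fun _ ⟨h', γ, y, hy, hw⟩ => ⟨h', γ, y, hI _ _ hy, hw⟩)

lemma W2Ideal_mono {I I' : IdealFamily k G} (hI : ∀ a b, I a b ≤ I' a b) (g : G.V) (d : H.V) :
    W2Ideal k G H Γ I g d ≤ W2Ideal k G H Γ I' g d :=
  Submodule.span_mono (fun _ ⟨g', x, γ, hx, hw⟩ => ⟨g', x, γ, hI _ _ hx, hw⟩)

lemma consMapF_mem (m : ℕ) (h' h'' h : H.V) (f : EdgeSpace k H h' h'')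
    {y : PathSpace k H h'' h} (hy : y ∈ lengthIdeal k H m h'' h) :
    consMapF k H h' h'' h f y ∈ lengthIdeal k H (m + 1) h' h := by
  have hle : lengthIdeal k H m h'' h ≤
      (lengthIdeal k H (m + 1) h' h).comap (consMapF k H h' h'' h f) := by
    rw [lengthIdeal, Submodule.span_le]
    rintro x ⟨q, hq, rfl⟩
    simp only [SetLike.mem_coe, Submodule.mem_comap]
    induction f using Finsupp.induction_linear with
    | zero => simp
    | add f g hf hg => rw [map_add, LinearMap.add_apply]; exact Submodule.add_mem _ hf hg
    | single e c =>
        have : consMapF k H h' h'' h (Finsupp.single e c) (Finsupp.single q 1) =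
            Finsupp.single ((Quiver.Hom.toPath e).comp q) c := by
          simp [consMapF, Finsupp.mapDomain_single]
        rw [this]
        exact single_mem_lengthIdeal k H (m + 1) _
          (by simp [Quiver.Path.length_comp, Quiver.Hom.toPath]; omega) c
  exact hle hy

lemma consMapB_mem (m : ℕ) (g g' g'' : G.V) (f : EdgeSpace k G g' g'')
    {x : PathSpace k G g g'} (hx : x ∈ lengthIdeal k G m g g') :
    consMapB k G g g' g'' f x ∈ lengthIdeal k G (m + 1) g g'' := by
  have hle : lengthIdeal k G m g g' ≤
      (lengthIdeal k G (m + 1) g g'').comap (consMapB k G g g' g'' f) := by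
    rw [lengthIdeal, Submodule.span_le]
    rintro x ⟨q, hq, rfl⟩
    simp only [SetLike.mem_coe, Submodule.mem_comap]
    induction f using Finsupp.induction_linear with
    | zero => simp
    | add f g hf hg => rw [map_add, LinearMap.add_apply]; exact Submodule.add_mem _ hf hg
    | single e c =>
        have : consMapB k G g g' g'' (Finsupp.single e c) (Finsupp.single q 1) =
            Finsupp.single (q.cons e) c := by
          simp [consMapB, Finsupp.mapDomain_single]
        rw [this]
        exact single_mem_lengthIdeal k G (m + 1) _ (by simp; omega) c
  exact hle hx

lemma attachF_mem (m : ℕ) (gg : G.V) (h' h'' h : H.V)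
    (t : Γ gg h' ⊗[k] EdgeSpace k H h' h'')
    {y : PathSpace k H h'' h} (hy : y ∈ lengthIdeal k H m h'' h) :
    Pi.single h' (attachF k G H Γ gg h' h'' h t y) ∈
      WIdeal k G H Γ (lengthIdeal k H (m + 1)) gg h := by
  induction t using TensorProduct.induction_on with
  | zero => simp
  | tmul γ f =>
      have : attachF k G H Γ gg h' h'' h (γ ⊗ₜ f) y = γ ⊗ₜ consMapF k H h' h'' h f y := by
        simp [attachF]
      rw [this]
      exact Submodule.subset_span ⟨h', γ, _, consMapF_mem k H m h' h'' h f hy, rfl⟩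
  | add u v hu hv =>
      rw [map_add, LinearMap.add_apply, Pi.single_add]
      exact Submodule.add_mem _ hu hv

lemma attachB_mem (m : ℕ) (g g' g'' : G.V) (hh : H.V)
    (t : EdgeSpace k G g' g'' ⊗[k] Γ g'' hh)
    {x : PathSpace k G g g'} (hx : x ∈ lengthIdeal k G m g g') :
    Pi.single g'' (attachB k G H Γ g g' g'' hh t x) ∈
      W2Ideal k G H Γ (lengthIdeal k G (m + 1)) g hh := by
  induction t using TensorProduct.induction_on with
  | zero => simp
  | tmul f γ =>
      have : attachB k G H Γ g g' g'' hh (f ⊗ₜ γ) x = consMapB k G g g' g'' f x ⊗ₜ γ := by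
        simp [attachB]
      rw [this]
      exact Submodule.subset_span ⟨g'', _, γ, consMapB_mem k G m g g' g'' f hx, rfl⟩
  | add u v hu hv =>
      rw [map_add, LinearMap.add_apply, Pi.single_add]
      exact Submodule.add_mem _ hu hv

variable (U : Connection k G H Γ)

lemma stepAuxF_mem {c g' : G.V} (e : G.E c g') (h h'' : H.V) (m : ℕ)
    (γ : Γ g' h'') {y : PathSpace k H h'' h} (hy : y ∈ lengthIdeal k H m h'' h) :
    stepAuxF k G H Γ U e h h'' (γ ⊗ₜ y) ∈ WIdeal k G H Γ (lengthIdeal k H (m + 1)) c h := by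
  set t := U c h'' (Pi.single g' (Finsupp.single e 1 ⊗ₜ γ)) with ht
  have hval : stepAuxF k G H Γ U e h h'' (γ ⊗ₜ y) =
      fun h' => attachF k G H Γ c h' h'' h (t h') y := by
    simp only [ht]
    simp [stepAuxF, piHomSwap]
    rfl
  rw [hval, ← Finset.univ_sum_single (fun h' => attachF k G H Γ c h' h'' h (t h') y)]
  exact Submodule.sum_mem _ fun h' _ => attachF_mem k G H Γ m c h' h'' h (t h') hy

lemma stepAuxB_mem {c d : H.V} (e : H.E c d) (g g' : G.V) (m : ℕ)
    (γ : Γ g' c) {x : PathSpace k G g g'} (hx : x ∈ lengthIdeal k G m g g') :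
    stepAuxB k G H Γ U e g g' (x ⊗ₜ γ) ∈ W2Ideal k G H Γ (lengthIdeal k G (m + 1)) g d := by
  set t := (U g' d).symm (Pi.single c (γ ⊗ₜ Finsupp.single e 1)) with ht
  have hval : stepAuxB k G H Γ U e g g' (x ⊗ₜ γ) =
      fun g'' => attachB k G H Γ g g' g'' d (t g'') x := by
    simp only [ht]
    simp [stepAuxB, piHomSwap]
    rfl
  rw [hval, ← Finset.univ_sum_single (fun g'' => attachB k G H Γ g g' g'' d (t g'') x)]
  exact Submodule.sum_mem _ fun g'' _ => attachB_mem k G H Γ m g g' g'' d (t g'') hx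

lemma stepF_mem {c g' : G.V} (e : G.E c g') (h : H.V) (m : ℕ)
    {w : WSp k G H Γ g' h} (hw : w ∈ WIdeal k G H Γ (lengthIdeal k H m) g' h) :
    stepF k G H Γ U e h w ∈ WIdeal k G H Γ (lengthIdeal k H (m + 1)) c h := by
  have hle : WIdeal k G H Γ (lengthIdeal k H m) g' h ≤
      (WIdeal k G H Γ (lengthIdeal k H (m + 1)) c h).comap (stepF k G H Γ U e h) := by
    rw [WIdeal, Submodule.span_le]
    rintro w ⟨h'', γ, y, hy, rfl⟩
    simp only [SetLike.mem_coe, Submodule.mem_comap]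
    have : stepF k G H Γ U e h (Pi.single h'' (γ ⊗ₜ y)) =
        stepAuxF k G H Γ U e h h'' (γ ⊗ₜ y) := by
      rw [stepF, LinearMap.sum_apply]
      rw [Finset.sum_eq_single h'']
      · simp
      · intro b _ hb
        simp [LinearMap.proj_apply, Pi.single_eq_of_ne hb]
      · simp
    rw [this]
    exact stepAuxF_mem k G H Γ U e h h'' m γ hy
  exact hle hw

lemma stepB_mem {c d : H.V} (e : H.E c d) (g : G.V) (m : ℕ)
    {w : W2Sp k G H Γ g c} (hw : w ∈ W2Ideal k G H Γ (lengthIdeal k G m) g c) :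
    stepB k G H Γ U e g w ∈ W2Ideal k G H Γ (lengthIdeal k G (m + 1)) g d := by
  have hle : W2Ideal k G H Γ (lengthIdeal k G m) g c ≤
      (W2Ideal k G H Γ (lengthIdeal k G (m + 1)) g d).comap (stepB k G H Γ U e g) := by
    rw [W2Ideal, Submodule.span_le]
    rintro w ⟨g', x, γ, hx, rfl⟩
    simp only [SetLike.mem_coe, Submodule.mem_comap]
    have : stepB k G H Γ U e g (Pi.single g' (x ⊗ₜ γ)) =
        stepAuxB k G H Γ U e g g' (x ⊗ₜ γ) := by
      rw [stepB, LinearMap.sum_apply]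
      rw [Finset.sum_eq_single g']
      · simp
      · intro b _ hb
        simp [LinearMap.proj_apply, Pi.single_eq_of_ne hb]
      · simp
    rw [this]
    exact stepAuxB_mem k G H Γ U e g g' m γ hx
  exact hle hw

lemma transportF_mem (g : G.V) (h : H.V) :
    ∀ {c : G.V} (p : Quiver.Path g c) (m : ℕ) {w : WSp k G H Γ c h},
      w ∈ WIdeal k G H Γ (lengthIdeal k H m) c h →
      transportF k G H Γ U g h p w ∈ WIdeal k G H Γ (lengthIdeal k H (m + p.length)) g h := by
  intro c p
  induction p with
  | nil => intro m w hw; simpa [transportF] using hw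
  | cons p e ih =>
      intro m w hw
      have h1 := stepF_mem k G H Γ U e h m hw
      have h2 := ih (m + 1) h1
      have heq : m + 1 + p.length = m + (p.cons e).length := by
        simp [Quiver.Path.length_cons]; omega
      rw [← heq]
      exact h2

lemma transportB_mem (g : G.V) (c : H.V) :
    ∀ {d : H.V} (p : Quiver.Path c d) (m : ℕ) {w : W2Sp k G H Γ g c},
      w ∈ W2Ideal k G H Γ (lengthIdeal k G m) g c →
      transportB k G H Γ U g c p w ∈ W2Ideal k G H Γ (lengthIdeal k G (m + p.length)) g d := by
  intro d p
  induction p with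
  | nil => intro m w hw; simpa [transportB] using hw
  | cons p e ih =>
      intro m w hw
      have h2 := ih m hw
      have h1 := stepB_mem k G H Γ U e g (m + p.length) h2
      have heq : m + p.length + 1 = m + (p.cons e).length := by
        simp [Quiver.Path.length_cons]; omega
      rw [← heq]
      exact h1

lemma incl0_mem (g : G.V) (h : H.V) (γ : Γ g h) :
    incl0 k G H Γ g h γ ∈ WIdeal k G H Γ (lengthIdeal k H 0) g h := by
  have : incl0 k G H Γ g h γ =
      Pi.single h (γ ⊗ₜ[k] (Finsupp.single Quiver.Path.nil 1 : PathSpace k H h h)) := by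
    funext h'
    rcases eq_or_ne h' h with rfl | hne
    · simp [incl0]
    · simp [incl0, hne, Pi.single_eq_of_ne hne]
  rw [this]
  exact Submodule.subset_span ⟨h, γ, _,
    single_mem_lengthIdeal k H 0 _ (Nat.zero_le _) 1, rfl⟩

lemma incl2_mem (g : G.V) (h : H.V) (γ : Γ g h) :
    incl2 k G H Γ g h γ ∈ W2Ideal k G H Γ (lengthIdeal k G 0) g h := by
  have : incl2 k G H Γ g h γ =
      Pi.single g ((Finsupp.single Quiver.Path.nil 1 : PathSpace k G g g) ⊗ₜ[k] γ) := by
    funext g'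
    rcases eq_or_ne g' g with rfl | hne
    · simp [incl2]
    · simp [incl2, hne, Pi.single_eq_of_ne hne]
  rw [this]
  exact Submodule.subset_span ⟨g, _, γ,
    single_mem_lengthIdeal k G 0 _ (Nat.zero_le _) 1, rfl⟩

end Aux

/-- Let `P` and `Q` be quivers, `n ≥ 2`, and `I_n` the admissible ideal of
the path algebra spanned by all paths of length at least `n`.  Then every quiver connection
`(U, Γ)` between `P` and `Q` is ideally connected as a connection between the bound quivers
`(P, I_n)` and `(Q, I_n)`; that is, the inclusion of connections between the bound quivers
`(P, I_n)` and `(Q, I_n)` into all quiver connections between `P` and `Q` is a bijection. -/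
theorem truncated_ideals_every_connection_ideally_connected
    (P Q : Quiv) (n : ℕ) (hn : 2 ≤ n)
    (Γ : P.V → Q.V → Type*) [∀ g h, AddCommGroup (Γ g h)] [∀ g h, Module k (Γ g h)]
    [∀ g h, FiniteDimensional k (Γ g h)]
    (U : Connection k P Q Γ) :
    IsIdeallyConnected k P Q Γ U (lengthIdeal k P n) (lengthIdeal k Q n) := by
  constructor
  · intro a b c x hx γ
    have hle : lengthIdeal k P n a b ≤
        (WIdeal k P Q Γ (lengthIdeal k Q n) a c).comap
          ((transportLF k P Q Γ U a b c).flip (incl0 k P Q Γ b c γ)) := by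
      rw [lengthIdeal, Submodule.span_le]
      rintro x ⟨p, hp, rfl⟩
      simp only [SetLike.mem_coe, Submodule.mem_comap, LinearMap.flip_apply]
      have hval : transportLF k P Q Γ U a b c (Finsupp.single p 1) (incl0 k P Q Γ b c γ) =
          transportF k P Q Γ U a c p (incl0 k P Q Γ b c γ) := by
        simp [transportLF]
      rw [hval]
      have h1 := transportF_mem k P Q Γ U a c p 0 (incl0_mem k P Q Γ b c γ)
      exact WIdeal_mono k P Q Γ
        (fun a' b' => lengthIdeal_mono k Q (by omega) a' b') a c h1
    exact hle hx
  · intro g c d y hy γ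
    have hle : lengthIdeal k Q n c d ≤
        (W2Ideal k P Q Γ (lengthIdeal k P n) g d).comap
          ((transportLB k P Q Γ U g c d).flip (incl2 k P Q Γ g c γ)) := by
      rw [lengthIdeal, Submodule.span_le]
      rintro y ⟨p, hp, rfl⟩
      simp only [SetLike.mem_coe, Submodule.mem_comap, LinearMap.flip_apply]
      have hval : transportLB k P Q Γ U g c d (Finsupp.single p 1) (incl2 k P Q Γ g c γ) =
          transportB k P Q Γ U g c p (incl2 k P Q Γ g c γ) := by
        simp [transportLB]
      rw [hval]
      have h1 := transportB_mem k P Q Γ U g c p 0 (incl2_mem k P Q Γ g c γ)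
      exact W2Ideal_mono k P Q Γ
        (fun a' b' => lengthIdeal_mono k P (by omega) a' b') g d h1
    exact hle hy
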